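/- Let H be a reproducing kernel Hilbert space on a set X with a normalized complete Pick kernel K, and let M be its multiplier algebra. Then for every y ∈ X the kernel function k_y = K(·, y) is a multiplier of H. -/

import Mathlib

open scoped ComplexOrder InnerProductSpace

/-- `h : X → ℂ` is a *multiplier* of the RKHS `H`, realized as a space of
functions on `X` via the evaluation map `ev`. -/
def IsMultiplier {X H : Type*} (ev : H → X → ℂ) (h : X → ℂ) : Prop :=
  ∀ f : H, ∃ g : H, ev g = fun x => h x * ev f x

/-- `f ∈ H` is *cyclic*: the set `{h·f : h a multiplier}` is dense in `H`. -/
def IsCyclicVec {X H : Type*} [TopologicalSpace H] (ev : H → X → ℂ) (f : H) : Prop :=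
  Dense {g : H | ∃ h : X → ℂ, IsMultiplier ev h ∧ ev g = fun x => h x * ev f x}

/-- A positive semi-definite function on `X × X`. -/
def IsPSDKernel {X : Type*} (F : X → X → ℂ) : Prop :=
  ∀ (n : ℕ) (x : Fin n → X), (Matrix.of fun i j : Fin n => F (x i) (x j)).PosSemidef

/-- `K` is a *complete Pick kernel*. -/
def IsCompletePick {X : Type*} (K : X → X → ℂ) : Prop :=
  (∀ x y, K x y ≠ 0) ∧
    ∃ x₀ : X, IsPSDKernel fun x y => 1 - K x x₀ * K x₀ y / (K x y * K x₀ x₀)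

namespace Stmt4Aux

variable {X : Type*} {F : X → X → ℂ}

local notation "conj'" => starRingEnd ℂ

lemma herm (hF : IsPSDKernel F) (x z : X) : F z x = conj' (F x z) := by
  have h := (hF 2 ![x, z]).1
  have := congrFun (congrFun h.symm 1) 0
  simpa [Matrix.conjTranspose_apply, Matrix.IsHermitian] using this

lemma psd_sum (hF : IsPSDKernel F) {n : ℕ} (x : Fin n → X) (c : Fin n → ℂ) :
    0 ≤ ∑ i, ∑ j, conj' (c i) * F (x i) (x j) * c j := by
  have h := (Matrix.posSemidef_iff_dotProduct_mulVec.mp (hF n x)).2 c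
  convert h using 1
  simp [dotProduct, Matrix.mulVec, Finset.mul_sum, mul_assoc]

lemma psd_diag (hF : IsPSDKernel F) (y : X) : 0 ≤ F y y := by
  have := psd_sum hF (fun _ : Fin 1 => y) (fun _ => 1)
  simpa using this

lemma real_of_nonneg {z : ℂ} (h : 0 ≤ z) : z = ((z.re : ℝ) : ℂ) := by
  rw [Complex.nonneg_iff] at h
  exact (Complex.ext_iff.mpr ⟨by simp, by simp [← h.2]⟩)

lemma psd_cs (hF : IsPSDKernel F) {n : ℕ} (x : Fin n → X) (y : X) (c : Fin n → ℂ) :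
    (Complex.normSq (∑ i, conj' (c i) * F (x i) y) : ℂ) ≤
      F y y * ∑ i, ∑ j, conj' (c i) * F (x i) (x j) * c j := by
  set A := ∑ i, ∑ j, conj' (c i) * F (x i) (x j) * c j with hA
  set B := ∑ i, conj' (c i) * F (x i) y with hB
  have hA0 : 0 ≤ A := psd_sum hF x c
  have key : ∀ t : ℂ, 0 ≤ A + t * B + conj' t * conj' B + conj' t * t * F y y := by
    intro t
    have h := psd_sum hF (Fin.snoc x y : Fin (n+1) → X) (Fin.snoc c t)
    rw [Fin.sum_univ_castSucc] at h
    simp only [Fin.snoc_castSucc, Fin.snoc_last, Fin.sum_univ_castSucc] at h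
    have e1 : ∑ i, (∑ j, conj' (c i) * F (x i) (x j) * c j + conj' (c i) * F (x i) y * t)
        = A + t * B := by
      rw [Finset.sum_add_distrib, hA, hB, Finset.mul_sum]
      congr 1
      exact Finset.sum_congr rfl fun i _ => by ring
    have e2 : ∑ j, conj' t * F y (x j) * c j = conj' t * conj' B := by
      rw [hB, map_sum, Finset.mul_sum]
      refine Finset.sum_congr rfl fun j _ => ?_
      rw [herm hF (x j) y]
      simp only [map_mul, RingHom.id_apply, RingHomCompTriple.comp_apply, Complex.conj_conj]
      ring
    calc (0:ℂ) ≤ _ := h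
    _ = A + t * B + conj' t * conj' B + conj' t * t * F y y := by
        rw [e1, e2]; ring
  have hDconj : conj' (F y y) = F y y := (herm hF y y).symm
  by_cases h0 : F y y = 0
  · have hB0 : B = 0 := by
      by_contra hBne
      have hnsq : Complex.normSq B ≠ 0 := fun h => hBne (Complex.normSq_eq_zero.mp h)
      set s : ℝ := (A.re + 1) / (2 * Complex.normSq B) with hs
      have h := key (-(s : ℂ) * conj' B)
      have : A + (-(s:ℂ) * conj' B) * B + conj' (-(s:ℂ) * conj' B) * conj' B
          + conj' (-(s:ℂ) * conj' B) * (-(s:ℂ) * conj' B) * F y y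
          = A - (2 * s * Complex.normSq B : ℝ) := by
        rw [h0]
        simp only [map_mul, map_neg, Complex.conj_conj, Complex.conj_ofReal]
        push_cast
        rw [← Complex.mul_conj]
        ring
      rw [this] at h
      have hs2 : 2 * s * Complex.normSq B = A.re + 1 := by
        rw [hs]; field_simp
      rw [hs2] at h
      rw [Complex.nonneg_iff] at h
      simp at h
      linarith [h.1]
    rw [hB0, h0]
    simp
  · set D := F y y with hD
    have h := key (-conj' B / D)
    have hcd : conj' D = D := hDconj
    have e : A + (-conj' B / D) * B + conj' (-conj' B / D) * conj' B
        + conj' (-conj' B / D) * (-conj' B / D) * D = A - (Complex.normSq B : ℂ) / D := by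
      simp only [map_div₀, map_neg, Complex.conj_conj, hcd]
      rw [← Complex.mul_conj]
      field_simp
      ring
    rw [e] at h
    have := sub_nonneg.mp h
    calc (Complex.normSq B : ℂ) = (Complex.normSq B : ℂ) / D * D := by field_simp
    _ ≤ A * D := mul_le_mul_of_nonneg_right this (psd_diag hF y)
    _ = D * A := mul_comm _ _



section Hilbert

variable {H : Type*} [NormedAddCommGroup H] [InnerProductSpace ℂ H]

lemma inner_self_nonneg' (v : H) : 0 ≤ ⟪v, v⟫_ℂ := by
  rw [Complex.nonneg_iff]
  constructor
  · simpa using inner_self_nonneg (𝕜 := ℂ) (x := v)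
  · exact (RCLike.im_to_complex ▸ (inner_self_im (𝕜 := ℂ) v) : (⟪v, v⟫_ℂ).im = 0).symm

lemma inner_self_ofReal (v : H) : ⟪v, v⟫_ℂ = ((‖v‖ ^ 2 : ℝ) : ℂ) := by
  have h1 : (‖v‖ ^ 2 : ℝ) = (⟪v, v⟫_ℂ).re := by
    simpa using norm_sq_eq_re_inner (𝕜 := ℂ) v
  rw [h1]
  exact real_of_nonneg (inner_self_nonneg' v)

lemma inner_linc {n : ℕ} (a b : Fin n → ℂ) (v w : Fin n → H) :
    ⟪∑ i, a i • v i, ∑ j, b j • w j⟫_ℂ = ∑ i, ∑ j, conj' (a i) * b j * ⟪v i, w j⟫_ℂ := by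
  rw [sum_inner]
  refine Finset.sum_congr rfl fun i _ => ?_
  rw [inner_smul_left, inner_sum, Finset.mul_sum]
  refine Finset.sum_congr rfl fun j _ => ?_
  rw [inner_smul_right]
  ring

lemma core_ineq {F : X → X → ℂ} (hF : IsPSDKernel F) (k : X → H) (p : X)
    (hFK : ∀ x z, (1 - F x z) * ⟪k x, k z⟫_ℂ = ⟪k x, k p⟫_ℂ * ⟪k p, k z⟫_ℂ / ⟪k p, k p⟫_ℂ)
    (y : X) {n : ℕ} (x : Fin n → X) (c : Fin n → ℂ) :
    ‖∑ i, (c i * conj' (F (x i) y)) • k (x i)‖ ≤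
      Real.sqrt ((F y y).re) * ‖∑ i, c i • k (x i)‖ := by
  classical
  set Kk : Fin n → Fin n → ℂ := fun i j => ⟪k (x i), k (x j)⟫_ℂ with hKk
  set S1 : ℂ := ∑ i, ∑ j, conj' (c i) * c j * (F (x i) y * conj' (F (x j) y)) * Kk i j with hS1
  set S2 : ℂ := ∑ i, ∑ j, conj' (c i) * c j * F (x i) (x j) * Kk i j with hS2
  set S3 : ℂ := ∑ i, ∑ j, conj' (c i) * c j * Kk i j with hS3
  set w' : H := ∑ i, (c i * conj' (F (x i) y)) • k (x i) with hw'
  set w : H := ∑ i, c i • k (x i) with hw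
  have hstepA : ⟪w', w'⟫_ℂ = S1 := by
    rw [hw', inner_linc, hS1]
    refine Finset.sum_congr rfl fun i _ => Finset.sum_congr rfl fun j _ => ?_
    simp only [map_mul, Complex.conj_conj]
    ring
  have hstepB : ⟪w, w⟫_ℂ = S3 := by
    rw [hw, inner_linc, hS3]
  -- the Schur-product step
  have hG : ∀ i j : Fin n, F y (x j) = conj' (F (x j) y) := fun i j => herm hF (x j) y
  set Gmat : Matrix (Fin n) (Fin n) ℂ :=
    Matrix.of (fun i j => F y y * F (x i) (x j) - F (x i) y * F y (x j)) with hGmat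
  have hGpsd : Gmat.PosSemidef := by
    rw [Matrix.posSemidef_iff_dotProduct_mulVec]
    constructor
    · ext i j
      simp only [hGmat, Matrix.conjTranspose_apply, Matrix.of_apply, star_sub, star_mul',
        Complex.star_def]
      rw [show (starRingEnd ℂ) (F y y) = F y y from (herm hF y y).symm,
        ← herm hF (x j) (x i), ← herm hF (x j) y, ← herm hF y (x i)]
      ring
    · intro d
      have hBB : ∀ z : ℂ, z * conj' z = (Complex.normSq z : ℂ) := by
        intro z; rw [Complex.mul_conj]
      have expand : dotProduct (star d) (Gmat.mulVec d)
          = F y y * (∑ i, ∑ j, conj' (d i) * F (x i) (x j) * d j)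
            - (∑ i, conj' (d i) * F (x i) y) * conj' (∑ i, conj' (d i) * F (x i) y) := by
        have hconjB : conj' (∑ i, conj' (d i) * F (x i) y) = ∑ j, d j * F y (x j) := by
          rw [map_sum]
          refine Finset.sum_congr rfl fun j _ => ?_
          rw [map_mul, Complex.conj_conj, ← hG j j]
        rw [hconjB, Finset.sum_mul_sum]
        simp only [dotProduct, Matrix.mulVec, Pi.star_apply, Complex.star_def,
          hGmat, Matrix.of_apply, Finset.mul_sum, ← Finset.sum_sub_distrib]
        refine Finset.sum_congr rfl fun i _ => ?_
        refine Finset.sum_congr rfl fun j _ => ?_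
        ring
      rw [expand, hBB]
      have := psd_cs hF x y d
      exact sub_nonneg.mpr this
  obtain ⟨Amat, hAmat⟩ : ∃ B : Matrix (Fin n) (Fin n) ℂ, Gmat = Matrix.conjTranspose B * B := by
    open scoped MatrixOrder in
    exact ⟨CFC.sqrt Gmat, by
      rw [(Matrix.nonneg_iff_posSemidef.mp (CFC.sqrt_nonneg Gmat)).1.eq,
        CFC.sqrt_mul_sqrt_self Gmat (Matrix.nonneg_iff_posSemidef.mpr hGpsd)]⟩
  have hGentry : ∀ i j, F y y * F (x i) (x j) - F (x i) y * F y (x j)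
      = ∑ m, conj' (Amat m i) * Amat m j := by
    intro i j
    have := congrFun (congrFun (congrArg (fun M => (M : Matrix (Fin n) (Fin n) ℂ)) hAmat) i) j
    simpa [Matrix.mul_apply, Matrix.conjTranspose_apply, hGmat] using this
  have hstepC : S1 ≤ F y y * S2 := by
    rw [← sub_nonneg]
    have key : F y y * S2 - S1 = ∑ m, ⟪(∑ j, (Amat m j * c j) • k (x j) : H),
        (∑ j, (Amat m j * c j) • k (x j) : H)⟫_ℂ := by
      have e1 : F y y * S2 - S1
          = ∑ i, ∑ j, conj' (c i) * c j * (∑ m, conj' (Amat m i) * Amat m j) * Kk i j := by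
        rw [hS1, hS2, Finset.mul_sum, ← Finset.sum_sub_distrib]
        refine Finset.sum_congr rfl fun i _ => ?_
        rw [Finset.mul_sum, ← Finset.sum_sub_distrib]
        refine Finset.sum_congr rfl fun j _ => ?_
        rw [← hGentry i j, ← hG i j]
        ring
      have e2 : ∀ m, ⟪(∑ j, (Amat m j * c j) • k (x j) : H),
          (∑ j, (Amat m j * c j) • k (x j) : H)⟫_ℂ
          = ∑ i, ∑ j, conj' (Amat m i * c i) * (Amat m j * c j) * Kk i j := fun m =>
        inner_linc _ _ _ _
      have swap3 : ∀ (f : Fin n → Fin n → Fin n → ℂ),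
          ∑ m, ∑ i, ∑ j, f m i j = ∑ i, ∑ j, ∑ m, f m i j := by
        intro f
        rw [Finset.sum_comm]
        exact Finset.sum_congr rfl fun i _ => Finset.sum_comm
      calc F y y * S2 - S1
          = ∑ i, ∑ j, conj' (c i) * c j * (∑ m, conj' (Amat m i) * Amat m j) * Kk i j := e1
        _ = ∑ i, ∑ j, ∑ m, conj' (Amat m i * c i) * (Amat m j * c j) * Kk i j := by
            refine Finset.sum_congr rfl fun i _ => Finset.sum_congr rfl fun j _ => ?_
            rw [Finset.mul_sum, Finset.sum_mul]
            refine Finset.sum_congr rfl fun m _ => ?_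
            simp only [map_mul]
            ring
        _ = ∑ m, ∑ i, ∑ j, conj' (Amat m i * c i) * (Amat m j * c j) * Kk i j :=
            (swap3 _).symm
        _ = _ := Finset.sum_congr rfl fun m _ => (e2 m).symm
    rw [key]
    exact Finset.sum_nonneg fun m _ => inner_self_nonneg' _
  have hstepD : S2 ≤ S3 := by
    rw [← sub_nonneg]
    set β : ℂ := ∑ i, conj' (c i) * ⟪k (x i), k p⟫_ℂ with hβ
    have key : S3 - S2 = β * conj' β / ⟪k p, k p⟫_ℂ := by
      have hconjβ : conj' β = ∑ j, c j * ⟪k p, k (x j)⟫_ℂ := by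
        rw [hβ, map_sum]
        refine Finset.sum_congr rfl fun j _ => ?_
        rw [map_mul, Complex.conj_conj, inner_conj_symm]
      rw [hconjβ, hβ, Finset.sum_mul_sum, hS2, hS3, ← Finset.sum_sub_distrib,
        Finset.sum_div]
      refine Finset.sum_congr rfl fun i _ => ?_
      rw [← Finset.sum_sub_distrib, Finset.sum_div]
      refine Finset.sum_congr rfl fun j _ => ?_
      have := hFK (x i) (x j)
      calc conj' (c i) * c j * Kk i j - conj' (c i) * c j * F (x i) (x j) * Kk i j
          = conj' (c i) * c j * ((1 - F (x i) (x j)) * ⟪k (x i), k (x j)⟫_ℂ) := by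
            rw [hKk]; ring
        _ = conj' (c i) * c j * (⟪k (x i), k p⟫_ℂ * ⟪k p, k (x j)⟫_ℂ / ⟪k p, k p⟫_ℂ) := by
            rw [this]
        _ = _ := by ring
    rw [key]
    have : β * conj' β / ⟪k p, k p⟫_ℂ = ((Complex.normSq β / ‖k p‖ ^ 2 : ℝ) : ℂ) := by
      rw [Complex.mul_conj, inner_self_ofReal]
      push_cast
      ring
    rw [this]
    exact Complex.zero_le_real.mpr (div_nonneg (Complex.normSq_nonneg _) (sq_nonneg _))
  have hyy : 0 ≤ F y y := psd_diag hF y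
  have chain : ⟪w', w'⟫_ℂ ≤ F y y * ⟪w, w⟫_ℂ := by
    rw [hstepA, hstepB]
    exact hstepC.trans (mul_le_mul_of_nonneg_left hstepD hyy)
  have hreal : ‖w'‖ ^ 2 ≤ (F y y).re * ‖w‖ ^ 2 := by
    have h1 : ⟪w', w'⟫_ℂ = ((‖w'‖ ^ 2 : ℝ) : ℂ) := inner_self_ofReal w'
    have hfr : F y y = (((F y y).re : ℝ) : ℂ) := real_of_nonneg hyy
    have h2 : F y y * ⟪w, w⟫_ℂ = (((F y y).re * ‖w‖ ^ 2 : ℝ) : ℂ) := by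
      rw [inner_self_ofReal]
      conv_lhs => rw [hfr]
      push_cast; ring
    rw [h1, h2] at chain
    exact_mod_cast chain
  calc ‖w'‖ = Real.sqrt (‖w'‖ ^ 2) := by
        rw [Real.sqrt_sq (norm_nonneg _)]
    _ ≤ Real.sqrt ((F y y).re * ‖w‖ ^ 2) := Real.sqrt_le_sqrt hreal
    _ = Real.sqrt ((F y y).re) * ‖w‖ := by
        rw [Real.sqrt_mul ((Complex.nonneg_iff.mp hyy).1), Real.sqrt_sq (norm_nonneg _)]

lemma dense_span_of_injective [CompleteSpace H] (ev : H →ₗ[ℂ] (X → ℂ))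
    (hev : Function.Injective ev) (k : X → H) (hk : ∀ (f : H) (x : X), ev f x = ⟪k x, f⟫_ℂ) :
    Dense ((Submodule.span ℂ (Set.range k) : Submodule ℂ H) : Set H) := by
  rw [Submodule.dense_iff_topologicalClosure_eq_top,
    Submodule.topologicalClosure_eq_top_iff]
  rw [Submodule.eq_bot_iff]
  intro f hf
  apply hev
  rw [map_zero]
  funext x
  rw [hk f x]
  exact hf (k x) (Submodule.subset_span (Set.mem_range_self x))

lemma mkMult [CompleteSpace H] (k : X → H)
    (hdense : Dense ((Submodule.span ℂ (Set.range k) : Submodule ℂ H) : Set H))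
    (u : X → ℂ) (r : ℝ) (hr : 0 ≤ r)
    (hbound : ∀ (n : ℕ) (x : Fin n → X) (c : Fin n → ℂ),
      ‖∑ i, (c i * conj' (u (x i))) • k (x i)‖ ≤ r * ‖∑ i, c i • k (x i)‖) :
    ∃ M : H →L[ℂ] H, ‖M‖ ≤ r ∧
      ∀ x, ContinuousLinearMap.adjoint M (k x) = conj' (u x) • k x := by
  classical
  set E : (X →₀ ℂ) →ₗ[ℂ] H := Finsupp.linearCombination ℂ k with hE
  set T' : (X →₀ ℂ) →ₗ[ℂ] H :=
    Finsupp.linearCombination ℂ (fun x => conj' (u x) • k x) with hT'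
  -- transfer the Fin-indexed bound to Finsupp
  have hbound' : ∀ c : X →₀ ℂ, ‖T' c‖ ≤ r * ‖E c‖ := by
    intro c
    set s := c.support with hs
    have hcard : ∀ (v : X → H), ∑ a ∈ s, c a • v a
        = ∑ i : Fin s.card, c ((s.equivFin.symm i : X)) • v ((s.equivFin.symm i : X)) := by
      intro v
      rw [← Finset.sum_attach s (fun a => c a • v a)]
      exact (Fintype.sum_equiv s.equivFin.symm _ _ (fun i => rfl)).symm
    have hEc : E c = ∑ i : Fin s.card, c ((s.equivFin.symm i : X)) • k ((s.equivFin.symm i : X)) := by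
      rw [hE, Finsupp.linearCombination_apply, Finsupp.sum, ← hcard]
    have hTc : T' c = ∑ i : Fin s.card,
        (c ((s.equivFin.symm i : X)) * conj' (u ((s.equivFin.symm i : X)))) • k ((s.equivFin.symm i : X)) := by
      rw [hT', Finsupp.linearCombination_apply, Finsupp.sum, ← hs,
        hcard (fun a => conj' (u a) • k a)]
      exact Finset.sum_congr rfl fun i _ => smul_smul _ _ _
    rw [hEc, hTc]
    exact hbound s.card _ _
  have hker : LinearMap.ker E ≤ LinearMap.ker T' := by
    intro c hc
    rw [LinearMap.mem_ker] at hc ⊢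
    have := hbound' c
    rw [hc, norm_zero, mul_zero] at this
    exact norm_le_zero_iff.mp this
  set T : ↥(LinearMap.range E) →ₗ[ℂ] H :=
    ((LinearMap.ker E).liftQ T' hker).comp
      (E.quotKerEquivRange.symm : ↥(LinearMap.range E) →ₗ[ℂ] ((X →₀ ℂ) ⧸ LinearMap.ker E)) with hT
  have hTapp : ∀ (c : X →₀ ℂ) (h : E c ∈ LinearMap.range E), T ⟨E c, h⟩ = T' c := by
    intro c h
    rw [hT]
    simp only [LinearMap.coe_comp, Function.comp_apply, LinearEquiv.coe_coe]
    rw [LinearMap.quotKerEquivRange_symm_apply_image]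
    rw [Submodule.mkQ_apply, Submodule.liftQ_apply]
  have hTbound : ∀ s : ↥(LinearMap.range E), ‖T s‖ ≤ r * ‖(s : H)‖ := by
    rintro ⟨-, ⟨c, rfl⟩⟩
    rw [hTapp c ⟨c, rfl⟩]
    exact hbound' c
  set Tc : ↥(LinearMap.range E) →L[ℂ] H := T.mkContinuous r hTbound with hTc2
  set e : ↥(LinearMap.range E) →L[ℂ] H := (LinearMap.range E).subtypeL with he
  have hrange : LinearMap.range E = Submodule.span ℂ (Set.range k) := by
    rw [hE]
    exact Finsupp.range_linearCombination ℂ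
  have hd : DenseRange e := by
    have : Set.range e = ((LinearMap.range E : Submodule ℂ H) : Set H) := Subtype.range_coe
    rw [DenseRange, this, hrange]
    exact hdense
  have hui : IsUniformInducing e := isometry_subtype_coe.isUniformInducing
  have hnn : ∀ s : ↥(LinearMap.range E), ‖s‖ ≤ (1 : NNReal) * ‖e s‖ := by
    intro s; simp [he]
  set A : H →L[ℂ] H := Tc.extend e with hA
  have hAe : ∀ s, A (e s) = Tc s := fun s => ContinuousLinearMap.extend_eq Tc hd hui s
  have hAnorm : ‖A‖ ≤ r := by
    have h1 := Tc.opNorm_extend_le hd hnn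
    have h2 : ‖Tc‖ ≤ r := LinearMap.mkContinuous_norm_le T hr hTbound
    calc ‖A‖ = ‖Tc.extend e‖ := rfl
    _ ≤ (1 : NNReal) * ‖Tc‖ := h1
    _ ≤ r := by simpa using h2
  have hAk : ∀ x, A (k x) = conj' (u x) • k x := by
    intro x
    have hmem : k x ∈ LinearMap.range E := by
      refine ⟨Finsupp.single x 1, ?_⟩
      rw [hE, Finsupp.linearCombination_single, one_smul]
    have hERepr : E (Finsupp.single x 1) = k x := by
      rw [hE, Finsupp.linearCombination_single, one_smul]
    have hstep : A (k x) = T' (Finsupp.single x 1) := by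
      have h0 : k x = e ⟨k x, hmem⟩ := rfl
      conv_lhs => rw [h0]
      rw [hAe]
      show T ⟨k x, hmem⟩ = _
      have h3 : (⟨k x, hmem⟩ : ↥(LinearMap.range E))
          = ⟨E (Finsupp.single x 1), ⟨_, rfl⟩⟩ := Subtype.ext hERepr.symm
      rw [h3]; exact hTapp _ _
    rw [hstep, hT', Finsupp.linearCombination_single, one_smul]
  refine ⟨ContinuousLinearMap.adjoint A, ?_, ?_⟩
  · rw [show ‖ContinuousLinearMap.adjoint A‖ = ‖A‖ from
      LinearIsometryEquiv.norm_map ContinuousLinearMap.adjoint A]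
    exact hAnorm
  · intro x
    rw [ContinuousLinearMap.adjoint_adjoint, hAk]

end Hilbert

end Stmt4Aux


/-- In an RKHS with a normalized complete Pick kernel, every kernel function
`k_y = K(·, y)` is a multiplier. -/
theorem stmt_4 {X H : Type*} [NormedAddCommGroup H] [InnerProductSpace ℂ H]
    [CompleteSpace H]
    (ev : H →ₗ[ℂ] (X → ℂ)) (hev : Function.Injective ev)
    (k : X → H) (hk : ∀ (f : H) (x : X), ev f x = ⟪k x, f⟫_ℂ)
    (x₀ : X) (hnorm : ∀ x : X, ev (k x₀) x = 1)
    (hpick : IsCompletePick fun x y => ev (k y) x) :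
    ∀ y : X, IsMultiplier (⇑ev) (ev (k y)) := by
  classical
  intro y f
  obtain ⟨hnz, p, hFpsd⟩ := hpick
  have hKi : ∀ x z : X, ev (k z) x = ⟪k x, k z⟫_ℂ := fun x z => hk (k z) x
  set K : X → X → ℂ := fun x z => ⟪k x, k z⟫_ℂ with hKdef
  have hnz' : ∀ x z, K x z ≠ 0 := by
    intro x z
    show ⟪k x, k z⟫_ℂ ≠ 0
    rw [← hKi x z]
    exact hnz x z
  set F : X → X → ℂ := fun x z => 1 - K x p * K p z / (K x z * K p p) with hFdef
  have hFpsd' : IsPSDKernel F := by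
    have e : F = (fun x z => 1 - ev (k p) x * ev (k z) p / (ev (k z) x * ev (k p) p)) := by
      funext x z
      simp only [hFdef, hKdef, hKi]
    rw [e]
    exact hFpsd
  have hKsymm : ∀ x z, K z x = (starRingEnd ℂ) (K x z) := fun x z =>
    (inner_conj_symm (k z) (k x)).symm
  have hFK : ∀ x z, (1 - F x z) * ⟪k x, k z⟫_ℂ
      = ⟪k x, k p⟫_ℂ * ⟪k p, k z⟫_ℂ / ⟪k p, k p⟫_ℂ := by
    intro x z
    have h1 : K x z ≠ 0 := hnz' x z
    have h2 : K p p ≠ 0 := hnz' p p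
    show (1 - F x z) * K x z = K x p * K p z / K p p
    rw [hFdef]
    field_simp
    ring
  have h1u : ∀ x q : X, 1 - F x q = K x p * K p q / (K x q * K p p) := by
    intro x q
    rw [hFdef]
    ring
  have h1une : ∀ x q : X, 1 - F x q ≠ 0 := by
    intro x q
    rw [h1u]
    exact div_ne_zero (mul_ne_zero (hnz' x p) (hnz' p q))
      (mul_ne_zero (hnz' x q) (hnz' p p))
  have hdense := Stmt4Aux.dense_span_of_injective ev hev k hk
  have hFyyre : 0 ≤ (F y y).re ∧ (F y y).re < 1 := by
    have hnn := Stmt4Aux.psd_diag hFpsd' y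
    constructor
    · exact (Complex.nonneg_iff.mp hnn).1
    · have hky : k y ≠ 0 := fun h => hnz' y y (by simp [hKdef, h])
      have hkp : k p ≠ 0 := fun h => hnz' p p (by simp [hKdef, h])
      have hid : (1 : ℂ) - F y y
          = ((Complex.normSq (K y p) / (‖k y‖ ^ 2 * ‖k p‖ ^ 2) : ℝ) : ℂ) := by
        rw [h1u y y, hKsymm y p]
        show K y p * (starRingEnd ℂ) (K y p) / (⟪k y, k y⟫_ℂ * ⟪k p, k p⟫_ℂ) = _
        rw [Complex.mul_conj, Stmt4Aux.inner_self_ofReal, Stmt4Aux.inner_self_ofReal]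
        push_cast
        ring
      have hpos : 0 < Complex.normSq (K y p) / (‖k y‖ ^ 2 * ‖k p‖ ^ 2) := by
        apply div_pos
        · exact Complex.normSq_pos.mpr (hnz' y p)
        · have h3 : 0 < ‖k y‖ := norm_pos_iff.mpr hky
          have h4 : 0 < ‖k p‖ := norm_pos_iff.mpr hkp
          positivity
      have := congrArg Complex.re hid
      simp only [Complex.sub_re, Complex.one_re, Complex.ofReal_re] at this
      linarith
  obtain ⟨Mu, hMu_norm, hMu_adj⟩ := Stmt4Aux.mkMult k hdense (fun x => F x y)
    (Real.sqrt ((F y y).re)) (Real.sqrt_nonneg _)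
    (fun n x c => Stmt4Aux.core_ineq hFpsd' k p hFK y x c)
  obtain ⟨Mv, hMv_norm, hMv_adj⟩ := Stmt4Aux.mkMult k hdense (fun x => F x x₀)
    (Real.sqrt ((F x₀ x₀).re)) (Real.sqrt_nonneg _)
    (fun n x c => Stmt4Aux.core_ineq hFpsd' k p hFK x₀ x c)
  have hlt : ‖Mu‖ < 1 := by
    refine lt_of_le_of_lt hMu_norm ?_
    calc Real.sqrt ((F y y).re) < Real.sqrt 1 := Real.sqrt_lt_sqrt hFyyre.1 hFyyre.2
    _ = 1 := Real.sqrt_one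
  set w : (H →L[ℂ] H)ˣ := Units.oneSub Mu hlt with hw
  set D : H →L[ℂ] H := ((w⁻¹ : (H →L[ℂ] H)ˣ) : H →L[ℂ] H) with hD
  set a : ℂ := K p y / K p x₀ with ha
  refine ⟨(a • (((1 : H →L[ℂ] H) - Mv) * D)) f, ?_⟩
  funext x
  rw [hk _ x, hKi x y, hk f x]
  -- adjoint computations
  have hqu : ∀ z : H, ⟪k x, Mu z⟫_ℂ = F x y * ⟪k x, z⟫_ℂ := by
    intro z
    rw [← ContinuousLinearMap.adjoint_inner_left, hMu_adj, inner_smul_left]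
    simp
  have hqv : ∀ z : H, ⟪k x, Mv z⟫_ℂ = F x x₀ * ⟪k x, z⟫_ℂ := by
    intro z
    rw [← ContinuousLinearMap.adjoint_inner_left, hMv_adj, inner_smul_left]
    simp
  have hfD : (w : H →L[ℂ] H) (D f) = f := by
    rw [hD, ← ContinuousLinearMap.mul_apply, Units.mul_inv, ContinuousLinearMap.one_apply]
  have hDfact : ⟪k x, f⟫_ℂ = (1 - F x y) * ⟪k x, D f⟫_ℂ := by
    conv_lhs => rw [← hfD]
    rw [hw, Units.val_oneSub, ContinuousLinearMap.sub_apply, ContinuousLinearMap.one_apply,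
      inner_sub_right, hqu]
    ring
  have hDf : ⟪k x, D f⟫_ℂ = ⟪k x, f⟫_ℂ / (1 - F x y) := by
    rw [hDfact]
    field_simp [h1une x y]
  -- expand the left side
  rw [ContinuousLinearMap.smul_apply, inner_smul_right, ContinuousLinearMap.mul_apply,
    ContinuousLinearMap.sub_apply, ContinuousLinearMap.one_apply, inner_sub_right, hqv, hDf]
  -- now a scalar identity
  have hKx1 : K x x₀ = 1 := by
    rw [hKdef]
    show ⟪k x, k x₀⟫_ℂ = 1
    rw [← hKi x x₀]
    exact hnorm x
  have hscalar : a * (1 - F x x₀) = K x y * (1 - F x y) := by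
    rw [ha, h1u x x₀, h1u x y, hKx1]
    field_simp [hnz' p x₀, hnz' x y, hnz' p p, hnz' x p, hnz' p y]
  have hne := h1une x y
  calc a * (⟪k x, f⟫_ℂ / (1 - F x y) - F x x₀ * (⟪k x, f⟫_ℂ / (1 - F x y)))
      = a * (1 - F x x₀) * ⟪k x, f⟫_ℂ / (1 - F x y) := by ring
    _ = K x y * (1 - F x y) * ⟪k x, f⟫_ℂ / (1 - F x y) := by rw [hscalar]
    _ = K x y * ⟪k x, f⟫_ℂ := by
        field_simp
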